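/- If a : [-1,1] → (0,∞) is a twice continuously differentiable even function solving ä - 3ȧ²/(2a) + 32a³ = 0 on [-1,1], then there exists R ∈ ℝ such that a(t) = R/(4(1+R²t²)) for all t ∈ [-1,1]. -/

import Mathlib

open Set

/-- If `a` is a positive, even, twice continuously differentiable solution of
`ä - 3 ȧ² / (2 a) + 32 a³ = 0` on `[-1, 1]`, then `a t = R / (4 (1 + R² t²))` on `[-1,1]`
for some real `R`. -/
theorem stmt1 (a : ℝ → ℝ) (ha : ContDiff ℝ 2 a)
    (hpos : ∀ t ∈ Icc (-1 : ℝ) 1, 0 < a t)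
    (heven : ∀ t, a (-t) = a t)
    (hode : ∀ t ∈ Icc (-1 : ℝ) 1,
      deriv (deriv a) t - 3 * (deriv a t) ^ 2 / (2 * a t) + 32 * a t ^ 3 = 0) :
    ∃ R : ℝ, ∀ t ∈ Icc (-1 : ℝ) 1, a t = R / (4 * (1 + R ^ 2 * t ^ 2)) := by
  have h0m : (0:ℝ) ∈ Icc (-1:ℝ) 1 := by constructor <;> norm_num
  have hda : Differentiable ℝ a := ha.differentiable (by norm_num)
  have h2 : ContDiff ℝ ((1:ℕ∞)+1) a := by exact_mod_cast ha
  have hdda : Differentiable ℝ (deriv a) :=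
    ((contDiff_succ_iff_deriv.mp h2).2.2).differentiable (by norm_num)
  have hd0 : deriv a 0 = 0 := by
    have h := deriv_comp_neg (f := a) (x := (0:ℝ))
    simp only [heven, neg_zero] at h
    linarith
  set R : ℝ := 4 * a 0 with hRdef
  have hR : 0 < R := by have := hpos 0 h0m; positivity
  -- constancy helper
  have hconst : ∀ f : ℝ → ℝ, (∀ t ∈ Icc (-1:ℝ) 1, HasDerivAt f 0 t) →
      ∀ t ∈ Icc (-1:ℝ) 1, f t = f 0 := by
    intro f hf t ht
    have hc : ContinuousOn f (Icc (-1:ℝ) 1) := fun x hx =>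
      (hf x hx).continuousAt.continuousWithinAt
    have key := constant_of_has_deriv_right_zero hc
      (fun x hx => ((hf x (Ico_subset_Icc_self hx)).hasDerivWithinAt))
    rw [key t ht, key 0 h0m]
  -- rearranged ODE
  have hodet : ∀ t ∈ Icc (-1:ℝ) 1,
      2 * a t * deriv (deriv a) t = 3 * (deriv a t)^2 - 64 * (a t)^4 := by
    intro t ht
    have h := hode t ht
    have hat : a t ≠ 0 := (hpos t ht).ne'
    field_simp at h
    nlinarith [h]
  -- Step A : energy conservation
  have hE : ∀ t ∈ Icc (-1:ℝ) 1,
      (deriv a t)^2 / (a t)^3 + 64 * a t = 16 * R := by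
    have hder : ∀ t ∈ Icc (-1:ℝ) 1,
        HasDerivAt (fun s => (deriv a s)^2 / (a s)^3 + 64 * a s) 0 t := by
      intro t ht
      have hat : a t ≠ 0 := (hpos t ht).ne'
      have h1 : HasDerivAt a (deriv a t) t := (hda t).hasDerivAt
      have h2' : HasDerivAt (deriv a) (deriv (deriv a) t) t := (hdda t).hasDerivAt
      have hnum : HasDerivAt (fun s => (deriv a s)^2)
          (2 * deriv a t * deriv (deriv a) t) t := by
        simpa [mul_comm] using h2'.fun_pow 2
      have hden : HasDerivAt (fun s => (a s)^3) (3 * (a t)^2 * deriv a t) t := by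
        simpa [mul_comm] using h1.fun_pow 3
      have hdiv := (hnum.fun_div hden (pow_ne_zero 3 hat)).fun_add (h1.const_mul 64)
      convert hdiv using 1 <;> try rfl
      have hot := hodet t ht
      field_simp
      linear_combination (-deriv a t) * hot
    intro t ht
    have := hconst _ hder t ht
    rw [this, hd0]
    field_simp [((hpos 0 h0m).ne')]
    ring
  -- d² = (16R - 64 a) a³
  have hE' : ∀ t ∈ Icc (-1:ℝ) 1,
      (deriv a t)^2 = (16 * R - 64 * a t) * (a t)^3 := by
    intro t ht
    have h := hE t ht
    have hat : a t ≠ 0 := (hpos t ht).ne'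
    field_simp at h
    nlinarith [h]
  -- Step B : deriv a t / (a t)^2 + 8 R t = 0
  have hB : ∀ t ∈ Icc (-1:ℝ) 1, deriv a t / (a t)^2 + 8 * R * t = 0 := by
    have hder : ∀ t ∈ Icc (-1:ℝ) 1,
        HasDerivAt (fun s => deriv a s / (a s)^2 + 8 * R * s) 0 t := by
      intro t ht
      have hat : a t ≠ 0 := (hpos t ht).ne'
      have h1 : HasDerivAt a (deriv a t) t := (hda t).hasDerivAt
      have h2' : HasDerivAt (deriv a) (deriv (deriv a) t) t := (hdda t).hasDerivAt
      have hden : HasDerivAt (fun s => (a s)^2) (2 * (a t) * deriv a t) t := by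
        simpa [mul_comm] using h1.fun_pow 2
      have hlin : HasDerivAt (fun s : ℝ => 8 * R * s) (8 * R) t := by
        simpa using (hasDerivAt_id t).const_mul (8 * R)
      have hdiv := (h2'.fun_div hden (pow_ne_zero 2 hat)).fun_add hlin
      convert hdiv using 1 <;> try rfl
      have hot := hodet t ht
      have hEt := hE' t ht
      field_simp
      linear_combination (-1/2) * hot + (1/2) * hEt
    intro t ht
    have := hconst _ hder t ht
    rw [this, hd0]
    simp
  -- Step C : 1/(a t) - 4 R t² constant
  have hC : ∀ t ∈ Icc (-1:ℝ) 1, 1 / a t - 4 * R * t^2 = 1 / a 0 := by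
    have hder : ∀ t ∈ Icc (-1:ℝ) 1,
        HasDerivAt (fun s => 1 / a s - 4 * R * s^2) 0 t := by
      intro t ht
      have hat : a t ≠ 0 := (hpos t ht).ne'
      have h1 : HasDerivAt a (deriv a t) t := (hda t).hasDerivAt
      have hinv := (hasDerivAt_const t (1:ℝ)).fun_div h1 hat
      have hquad : HasDerivAt (fun s : ℝ => 4 * R * s^2) (4 * R * (2 * t)) t := by
        simpa [mul_comm, mul_assoc] using (hasDerivAt_pow 2 t).const_mul (4 * R)
      have hd := hinv.fun_sub hquad
      convert hd using 1 <;> try rfl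
      have hBt := hB t ht
      have hdt : deriv a t = -(8 * R * t) * (a t)^2 := by
        have h2 : deriv a t / (a t)^2 = -(8 * R * t) := by linarith
        field_simp at h2
        linarith
      rw [hdt]
      field_simp
      ring
    intro t ht
    have := hconst _ hder t ht
    simpa using this
  -- finish
  refine ⟨R, fun t ht => ?_⟩
  have hat : a t ≠ 0 := (hpos t ht).ne'
  have ha0 : a 0 ≠ 0 := (hpos 0 h0m).ne'
  have h := hC t ht
  have hpos2 : (0:ℝ) < 1 + R^2 * t^2 := by positivity
  have ha0R : 1 / a 0 = 4 / R := by rw [hRdef]; field_simp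
  rw [ha0R] at h
  field_simp at h ⊢
  nlinarith [h]
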